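/- Suppose u = (u₁,u₂) solves the eigenvalue equation (λ − L)u = 0 for the linearized operator, i.e. u₂' − ρu₁' − (2/(p-1))u₁ + pκ_p∫₀^ρ u₂ = λu₁ and u₁' − ρu₂' − (2/(p-1))u₂ = λu₂, with u₁(0) = 0. Then u₁(ρ) = ρu₂(ρ) + (λ + (3−p)/(p−1))∫₀^ρ u₂(s)ds, and the function w(ρ) := ∫₀^ρ u₂(s)ds satisfies the second-order ODE (1−ρ²)w'' − (2λ + 4/(p−1))ρw' − [(λ + 2/(p−1))(λ + (3−p)/(p−1)) − pκ_p]w = 0. -/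

import Mathlib

open Set MeasureTheory Filter Topology

/-- If `u = (u₁,u₂)` solves the eigenvalue equation `(λ − L)u = 0`, i.e.
`u₂' − ρu₁' − (2/(p-1))u₁ + pκ_p∫₀^ρ u₂ = λu₁` and `u₁' − ρu₂' − (2/(p-1))u₂ = λu₂`,
with `u₁(0) = 0`, then `u₁(ρ) = ρu₂(ρ) + (λ + (3−p)/(p−1))∫₀^ρ u₂`, and
`w(ρ) := ∫₀^ρ u₂` satisfies
`(1−ρ²)w'' − (2λ + 4/(p−1))ρw' − [(λ + 2/(p−1))(λ + (3−p)/(p−1)) − pκ_p]w = 0`. -/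
theorem eigenvalue_equation_reduction
    (p κ : ℝ) (hp : 3 < p) (hκ : κ = 2 * (p + 1) / (p - 1) ^ 2)
    (lam : ℂ) (u₁ u₂ : ℝ → ℂ)
    (hreg₁ : ContDiffOn ℝ 1 u₁ (Set.Ico (0 : ℝ) 1))
    (hreg₂ : ContDiffOn ℝ 1 u₂ (Set.Ico (0 : ℝ) 1))
    (hu₁0 : u₁ 0 = 0)
    (heq₁ : ∀ ρ ∈ Set.Ico (0 : ℝ) 1,
      deriv u₂ ρ - (ρ : ℂ) * deriv u₁ ρ - ((2 / (p - 1) : ℝ) : ℂ) * u₁ ρ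
        + ((p * κ : ℝ) : ℂ) * ∫ s in (0:ℝ)..ρ, u₂ s = lam * u₁ ρ)
    (heq₂ : ∀ ρ ∈ Set.Ico (0 : ℝ) 1,
      deriv u₁ ρ - (ρ : ℂ) * deriv u₂ ρ - ((2 / (p - 1) : ℝ) : ℂ) * u₂ ρ = lam * u₂ ρ) :
    (∀ ρ ∈ Set.Ico (0 : ℝ) 1,
      u₁ ρ = (ρ : ℂ) * u₂ ρ
        + (lam + (((3 - p) / (p - 1) : ℝ) : ℂ)) * ∫ s in (0:ℝ)..ρ, u₂ s) ∧
    (∀ ρ ∈ Set.Ico (0 : ℝ) 1,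
      ((1 - ρ ^ 2 : ℝ) : ℂ) *
          deriv (fun σ => deriv (fun σ' => ∫ s in (0:ℝ)..σ', u₂ s) σ) ρ
        - (2 * lam + ((4 / (p - 1) : ℝ) : ℂ)) * (ρ : ℂ) *
          deriv (fun σ' => ∫ s in (0:ℝ)..σ', u₂ s) ρ
        - ((lam + ((2 / (p - 1) : ℝ) : ℂ)) * (lam + (((3 - p) / (p - 1) : ℝ) : ℂ))
            - ((p * κ : ℝ) : ℂ)) * (∫ s in (0:ℝ)..ρ, u₂ s) = 0) := by
  have hp1 : (1 : ℝ) < p := by linarith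
  have hpR : (p - 1 : ℝ) ≠ 0 := by linarith
  have hpc : ((p : ℂ) - 1) ≠ 0 := by
    have := Complex.ofReal_ne_zero.mpr hpR
    push_cast at this
    exact this
  have hmc : ((3:ℂ) - (p:ℂ)) / ((p:ℂ) - 1) = 2 / ((p:ℂ) - 1) - 1 := by
    field_simp
    ring
  set W : ℝ → ℂ := fun σ' => ∫ s in (0:ℝ)..σ', u₂ s with hWdef
  have hWa : ∀ ρ : ℝ, (∫ s in (0:ℝ)..ρ, u₂ s) = W ρ := fun _ => rfl
  have hW0 : W 0 = 0 := intervalIntegral.integral_same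
  have hc1 : ContinuousOn u₁ (Set.Ico (0:ℝ) 1) := hreg₁.continuousOn
  have hc2 : ContinuousOn u₂ (Set.Ico (0:ℝ) 1) := hreg₂.continuousOn
  have hIcc : ∀ b ∈ Set.Ico (0:ℝ) 1, Set.Icc (0:ℝ) b ⊆ Set.Ico (0:ℝ) 1 := by
    intro b hb x hx
    exact ⟨hx.1, lt_of_le_of_lt hx.2 hb.2⟩
  have hInt : ∀ b ∈ Set.Ico (0:ℝ) 1, IntervalIntegrable u₂ volume 0 b := by
    intro b hb
    apply (hc2.mono ?_).intervalIntegrable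
    rw [Set.uIcc_of_le hb.1]
    exact hIcc b hb
  have hWcont : ∀ b ∈ Set.Ico (0:ℝ) 1, ContinuousOn W (Set.Icc 0 b) := by
    intro b hb
    have := intervalIntegral.continuousOn_primitive_interval'
      (μ := volume) (hInt b hb) (Set.left_mem_uIcc (a := (0:ℝ)) (b := b))
    rwa [Set.uIcc_of_le hb.1] at this
  have hWd : ∀ σ ∈ Set.Ioo (0:ℝ) 1, HasDerivAt W (u₂ σ) σ := by
    intro σ hσ
    have hσico : σ ∈ Set.Ico (0:ℝ) 1 := ⟨hσ.1.le, hσ.2⟩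
    have hca : ∀ x ∈ Set.Ioo (0:ℝ) 1, ContinuousAt u₂ x := fun x hx =>
      (hc2.mono Set.Ioo_subset_Ico_self).continuousAt (isOpen_Ioo.mem_nhds hx)
    exact intervalIntegral.integral_hasDerivAt_right (hInt σ hσico)
      (ContinuousAt.stronglyMeasurableAtFilter isOpen_Ioo hca σ hσ) (hca σ hσ)
  have hd1 : ∀ σ ∈ Set.Ioo (0:ℝ) 1, HasDerivAt u₁ (deriv u₁ σ) σ := by
    intro σ hσ
    exact ((hreg₁.differentiableOn one_ne_zero).differentiableAt
      (Filter.mem_of_superset (isOpen_Ioo.mem_nhds hσ) Set.Ioo_subset_Ico_self)).hasDerivAt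
  have hd2 : ∀ σ ∈ Set.Ioo (0:ℝ) 1, HasDerivAt u₂ (deriv u₂ σ) σ := by
    intro σ hσ
    exact ((hreg₂.differentiableOn one_ne_zero).differentiableAt
      (Filter.mem_of_superset (isOpen_Ioo.mem_nhds hσ) Set.Ioo_subset_Ico_self)).hasDerivAt
  -- Part 1
  have hpart1 : ∀ ρ ∈ Set.Ico (0:ℝ) 1,
      u₁ ρ = (ρ : ℂ) * u₂ ρ + (lam + (((3 - p) / (p - 1) : ℝ) : ℂ)) * W ρ := by
    intro ρ hρ
    rcases eq_or_lt_of_le hρ.1 with h0 | h0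
    · rw [← h0]
      simp [hu₁0, hW0]
    set μc : ℂ := lam + (((3 - p) / (p - 1) : ℝ) : ℂ) with hμc
    set F : ℝ → ℂ := fun σ => u₁ σ - (σ : ℂ) * u₂ σ - μc * W σ with hF
    have hFc : ContinuousOn F (Set.Icc 0 ρ) := by
      have hsub := hIcc ρ hρ
      exact ((hc1.mono hsub).sub
        ((Complex.continuous_ofReal.continuousOn).mul (hc2.mono hsub))).sub
        (continuousOn_const.mul (hWcont ρ hρ))
    have hFd : ∀ σ ∈ Set.Ioo (0:ℝ) 1, HasDerivAt F 0 σ := by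
      intro σ hσ
      have hσico : σ ∈ Set.Ico (0:ℝ) 1 := ⟨hσ.1.le, hσ.2⟩
      have hprod : HasDerivAt (fun s : ℝ => (s : ℂ) * u₂ s)
          ((1 : ℂ) * u₂ σ + (σ : ℂ) * deriv u₂ σ) σ :=
        (Complex.ofRealCLM.hasDerivAt).mul (hd2 σ hσ)
      have hWd' : HasDerivAt (fun s => μc * W s) (μc * u₂ σ) σ := (hWd σ hσ).const_mul μc
      have : HasDerivAt F
          (deriv u₁ σ - ((1 : ℂ) * u₂ σ + (σ : ℂ) * deriv u₂ σ) - μc * u₂ σ) σ :=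
        ((hd1 σ hσ).sub hprod).sub hWd'
      convert this using 1
      have h2 := heq₂ σ hσico
      push_cast [hμc] at h2 ⊢
      linear_combination (-1 : ℂ) * h2 + u₂ σ * hmc
    have hconst : ∀ ε ∈ Set.Ioc (0:ℝ) ρ, F ρ = F ε := by
      intro ε hε
      have hd : ∀ x ∈ Set.Ico ε ρ, HasDerivWithinAt F 0 (Set.Ici x) x := by
        intro x hx
        exact (hFd x ⟨lt_of_lt_of_le hε.1 hx.1, hx.2.trans hρ.2⟩).hasDerivWithinAt
      exact constant_of_has_deriv_right_zero
        (hFc.mono (Set.Icc_subset_Icc hε.1.le le_rfl)) hd ρ (Set.right_mem_Icc.2 hε.2)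
    have hne : (𝓝[Set.Ioc (0:ℝ) ρ] 0).NeBot := by
      rw [← mem_closure_iff_nhdsWithin_neBot, closure_Ioc h0.ne]
      exact Set.left_mem_Icc.2 h0.le
    have hT1 : Tendsto F (𝓝[Set.Ioc (0:ℝ) ρ] 0) (𝓝 (F 0)) :=
      (hFc 0 (Set.left_mem_Icc.2 h0.le)).mono_left
        (nhdsWithin_mono _ Set.Ioc_subset_Icc_self)
    have hT2 : Tendsto F (𝓝[Set.Ioc (0:ℝ) ρ] 0) (𝓝 (F ρ)) := by
      refine Tendsto.congr' ?_ tendsto_const_nhds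
      filter_upwards [self_mem_nhdsWithin] with ε hε using (hconst ε hε)
    have hFρ : F ρ = F 0 := tendsto_nhds_unique hT2 hT1
    have hF0 : F 0 = 0 := by simp [hF, hu₁0, hW0]
    have : F ρ = 0 := hFρ.trans hF0
    rw [hF] at this
    linear_combination this
  refine ⟨fun ρ hρ => by rw [hWa]; exact hpart1 ρ hρ, ?_⟩
  -- Part 2
  have hgEq : ∀ σ ∈ Set.Ioo (0:ℝ) 1, deriv W σ = u₂ σ := fun σ hσ => (hWd σ hσ).deriv
  intro ρ hρ
  rw [hWa]
  rcases eq_or_lt_of_le hρ.1 with h0 | h0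
  · -- boundary case ρ = 0
    have h0' : ρ = 0 := h0.symm
    subst h0'
    have hkey : deriv (fun σ => deriv W σ) 0 = 0 := by
      by_cases hdiff : DifferentiableAt ℝ (fun σ => deriv W σ) 0
      · -- the filter used throughout
        have h0mem : (0:ℝ) ∈ Set.Ico (0:ℝ) 1 := ⟨le_rfl, one_pos⟩
        have hne : (𝓝[Set.Ioo (0:ℝ) (1/2)] (0:ℝ)).NeBot := by
          rw [← mem_closure_iff_nhdsWithin_neBot, closure_Ioo (by norm_num : (0:ℝ) ≠ 1/2)]
          exact Set.left_mem_Icc.2 (by norm_num)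
        have hsub1 : Set.Ioo (0:ℝ) (1/2) ⊆ Set.Ioo 0 1 := Set.Ioo_subset_Ioo le_rfl (by norm_num)
        have hsub2 : Set.Ioo (0:ℝ) (1/2) ⊆ Set.Ico 0 1 := hsub1.trans Set.Ioo_subset_Ico_self
        -- Step A : deriv W 0 = u₂ 0
        have hA : deriv W 0 = u₂ 0 := by
          have t1 : Tendsto (fun σ => deriv W σ) (𝓝[Set.Ioo (0:ℝ) (1/2)] 0)
              (𝓝 (deriv W 0)) :=
            (hdiff.continuousAt.continuousWithinAt (s := Set.Ioo (0:ℝ) (1/2)))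
          have t2 : Tendsto u₂ (𝓝[Set.Ioo (0:ℝ) (1/2)] 0) (𝓝 (u₂ 0)) :=
            (hc2 0 h0mem).mono_left (nhdsWithin_mono _ hsub2)
          have t1' : Tendsto u₂ (𝓝[Set.Ioo (0:ℝ) (1/2)] 0) (𝓝 (deriv W 0)) := by
            refine t1.congr' ?_
            filter_upwards [self_mem_nhdsWithin] with σ hσ using hgEq σ (hsub1 hσ)
          exact tendsto_nhds_unique t1' t2
        -- Step B : derivWithin u₂ (Ico 0 1) 0 = 0
        have hdw1 : ContinuousOn (derivWithin u₁ (Set.Ico (0:ℝ) 1)) (Set.Ico (0:ℝ) 1) :=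
          hreg₁.continuousOn_derivWithin (uniqueDiffOn_Ico 0 1) le_rfl
        have hdw2 : ContinuousOn (derivWithin u₂ (Set.Ico (0:ℝ) 1)) (Set.Ico (0:ℝ) 1) :=
          hreg₂.continuousOn_derivWithin (uniqueDiffOn_Ico 0 1) le_rfl
        have hB : derivWithin u₂ (Set.Ico (0:ℝ) 1) 0 = 0 := by
          set φ : ℝ → ℂ := fun σ => (σ:ℂ) * derivWithin u₁ (Set.Ico (0:ℝ) 1) σ
            + (((2 / (p - 1) : ℝ) : ℂ) + lam) * u₁ σ - ((p * κ : ℝ) : ℂ) * W σ with hφ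
          have tφ : Tendsto φ (𝓝[Set.Ioo (0:ℝ) (1/2)] 0) (𝓝 0) := by
            have c1 : ContinuousWithinAt (fun σ : ℝ => (σ:ℂ)) (Set.Ioo (0:ℝ) (1/2)) 0 :=
              Complex.continuous_ofReal.continuousWithinAt
            have c2 : ContinuousWithinAt (derivWithin u₁ (Set.Ico (0:ℝ) 1))
                (Set.Ioo (0:ℝ) (1/2)) 0 :=
              (hdw1 0 h0mem).mono hsub2
            have c3 : ContinuousWithinAt u₁ (Set.Ioo (0:ℝ) (1/2)) 0 :=
              (hc1 0 h0mem).mono hsub2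
            have c4 : ContinuousWithinAt W (Set.Ioo (0:ℝ) (1/2)) 0 := by
              have := (hWcont (1/2) (by constructor <;> norm_num)) 0
                (Set.left_mem_Icc.2 (by norm_num))
              exact this.mono (fun x hx => ⟨hx.1.le, hx.2.le⟩)
            have : ContinuousWithinAt φ (Set.Ioo (0:ℝ) (1/2)) 0 :=
              ((c1.mul c2).add (continuousWithinAt_const.mul c3)).sub
                (continuousWithinAt_const.mul c4)
            have h00 : φ 0 = 0 := by simp [hφ, hu₁0, hW0]
            rw [show (0:ℂ) = φ 0 from h00.symm]
            exact this
          have tdw : Tendsto (derivWithin u₂ (Set.Ico (0:ℝ) 1)) (𝓝[Set.Ioo (0:ℝ) (1/2)] 0)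
              (𝓝 (derivWithin u₂ (Set.Ico (0:ℝ) 1) 0)) :=
            (hdw2 0 h0mem).mono_left (nhdsWithin_mono _ hsub2)
          have teq : Tendsto (derivWithin u₂ (Set.Ico (0:ℝ) 1)) (𝓝[Set.Ioo (0:ℝ) (1/2)] 0)
              (𝓝 0) := by
            refine tφ.congr' ?_
            filter_upwards [self_mem_nhdsWithin] with σ hσ
            have hσIoo : σ ∈ Set.Ioo (0:ℝ) 1 := hsub1 hσ
            have hIconhds : Set.Ico (0:ℝ) 1 ∈ 𝓝 σ :=
              Filter.mem_of_superset (isOpen_Ioo.mem_nhds hσIoo) Set.Ioo_subset_Ico_self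
            have e2 : derivWithin u₂ (Set.Ico (0:ℝ) 1) σ = deriv u₂ σ :=
              derivWithin_of_mem_nhds hIconhds
            have e1 : derivWithin u₁ (Set.Ico (0:ℝ) 1) σ = deriv u₁ σ :=
              derivWithin_of_mem_nhds hIconhds
            have h1 := heq₁ σ ⟨hσIoo.1.le, hσIoo.2⟩
            rw [hWa] at h1
            simp only [hφ, e1, e2]
            linear_combination -h1
          exact tendsto_nhds_unique tdw teq
        -- Step C : u₂ has one-sided derivative 0 at 0
        have hC : HasDerivWithinAt u₂ 0 (Set.Ico (0:ℝ) 1) 0 := by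
          have := ((hreg₂.differentiableOn one_ne_zero) 0 h0mem).hasDerivWithinAt
          rwa [hB] at this
        -- Step D : conclude
        have hD : HasDerivWithinAt (fun σ => deriv W σ)
            (deriv (fun σ => deriv W σ) 0) (Set.Ico (0:ℝ) 1) 0 :=
          hdiff.hasDerivAt.hasDerivWithinAt
        have hDu : HasDerivWithinAt u₂ (deriv (fun σ => deriv W σ) 0) (Set.Ico (0:ℝ) 1) 0 := by
          refine hD.congr ?_ hA.symm
          intro y hy
          rcases eq_or_lt_of_le hy.1 with hy0 | hy0
          · rw [← hy0]; exact hA.symm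
          · exact (hgEq y ⟨hy0, hy.2⟩).symm
        have := hDu.derivWithin (uniqueDiffOn_Ico 0 1 0 h0mem)
        rw [hB] at this
        exact this.symm
      · exact deriv_zero_of_not_differentiableAt hdiff
    rw [hkey, hW0]
    push_cast
    ring
  · -- interior case
    have hρIoo : ρ ∈ Set.Ioo (0:ℝ) 1 := ⟨h0, hρ.2⟩
    have hev : (fun σ => deriv W σ) =ᶠ[𝓝 ρ] u₂ := by
      filter_upwards [isOpen_Ioo.mem_nhds hρIoo] with σ hσ using hgEq σ hσ
    have hdd : deriv (fun σ => deriv W σ) ρ = deriv u₂ ρ := hev.deriv_eq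
    rw [hdd, hgEq ρ hρIoo]
    have h1 := heq₁ ρ hρ
    have h2 := heq₂ ρ hρ
    have h3 := hpart1 ρ hρ
    rw [hWa] at h1
    push_cast at h1 h2 h3 ⊢
    linear_combination h1 + (ρ:ℂ) * h2 + (lam + 2/((p:ℂ)-1)) * h3
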